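/- Let p > 1 and suppose η > 1 and u > U ≥ 0. Then setting H = η(u - U) + U, one has η(u^p - U^p) + U^p < H^p. -/

import Mathlib

theorem stmt_12 (p U u η : ℝ) (hp : 1 < p) (hU : 0 ≤ U) (hUu : U < u)
    (hη : 1 < η) :
    η * (u ^ p - U ^ p) + U ^ p < (η * (u - U) + U) ^ p := by
  set x := η * (u - U) + U with hx
  have hux : u < x := by nlinarith
  have hxmem : x ∈ Set.Ici (0:ℝ) := le_of_lt (lt_of_le_of_lt hU (hUu.trans hux))
  have h := (strictConvexOn_rpow hp).slope_strict_mono_adjacent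
    (Set.mem_Ici.mpr hU) hxmem hUu hux
  have h1 : (0:ℝ) < u - U := by linarith
  have h2 : (0:ℝ) < x - u := by linarith
  rw [div_lt_div_iff₀ h1 h2] at h
  have hxu : x - u = (η - 1) * (u - U) := by ring
  rw [hxu, show (u ^ p - U ^ p) * ((η - 1) * (u - U)) = (u ^ p - U ^ p) * (η - 1) * (u - U) by ring] at h
  have h' := lt_of_mul_lt_mul_right h h1.le
  nlinarith [h']
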